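/- Let γ ∈ (0,1] and let w : [0,∞) → [0,∞) be continuous and satisfy w(t₂) − w(t₁) ≤ (1−γ)(t₂ − t₁) for all 0 ≤ t₁ ≤ t₂. For t ≥ 0 let v(t) denote the unique x ≥ 0 with x = w(t + x). Fix t > 0 and suppose w is differentiable at the point s₀ := t + v(t), with derivative w′(s₀) (necessarily w′(s₀) ≤ 1 − γ, so 1 − w′(s₀) ≥ γ > 0). Then v is differentiable at t and v′(t) = w′(s₀) / (1 − w′(s₀)). -/

import Mathlib

/-- Differentiability of the fluid potential waiting time: if `w` is differentiable at
`s₀ = t + v(t)` with derivative `d`, then `v` is differentiable at `t > 0` with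
`v′(t) = d / (1 − d)`. -/
theorem pwt_deriv
    (γ : ℝ) (hγ : γ ∈ Set.Ioc (0:ℝ) 1)
    (w : ℝ → ℝ)
    (hw_nonneg : ∀ u, 0 ≤ u → 0 ≤ w u)
    (hw_cont : ContinuousOn w (Set.Ici (0:ℝ)))
    (hw_growth : ∀ t₁ t₂, 0 ≤ t₁ → t₁ ≤ t₂ → w t₂ - w t₁ ≤ (1 - γ) * (t₂ - t₁))
    (v : ℝ → ℝ)
    (hv : ∀ u, 0 ≤ u → 0 ≤ v u ∧ v u = w (u + v u))
    (t : ℝ) (ht : 0 < t)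
    (d : ℝ) (hw' : HasDerivAt w d (t + v t)) :
    HasDerivAt v (d / (1 - d)) t := by
  obtain ⟨hγ0, hγ1⟩ := hγ
  have hvt := hv t ht.le
  set s₀ := t + v t with hs₀
  have hs₀pos : 0 < s₀ := by have := hvt.1; simp only [hs₀]; linarith
  set f : ℝ → ℝ := fun s => s - w s with hf
  set g : ℝ → ℝ := fun u => u + v u with hg
  -- d ≤ 1 - γ
  have hd : d ≤ 1 - γ := by
    have hslope : Filter.Tendsto (slope w s₀) (nhdsWithin s₀ (Set.Ioi s₀)) (nhds d) :=
      (hasDerivAt_iff_tendsto_slope.mp hw').mono_left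
        (nhdsWithin_mono _ fun s hs => ne_of_gt hs)
    refine le_of_tendsto hslope ?_
    filter_upwards [self_mem_nhdsWithin] with s hs
    have hs0 : s₀ < s := hs
    rw [slope_def_field, div_le_iff₀ (by linarith)]
    have := hw_growth s₀ s hs₀pos.le hs0.le
    linarith
  have h1d : (0:ℝ) < 1 - d := by linarith
  -- f grows at rate at least γ
  have hf_mono : ∀ s₁ s₂, 0 ≤ s₁ → s₁ ≤ s₂ → γ * (s₂ - s₁) ≤ f s₂ - f s₁ := by
    intro s₁ s₂ h1 h12
    have := hw_growth s₁ s₂ h1 h12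
    simp only [hf]
    nlinarith
  -- g is a right inverse of f on nonnegatives
  have hfg : ∀ u, 0 ≤ u → f (g u) = u := by
    intro u hu
    have h2 := (hv u hu).2
    simp only [hf, hg]
    linarith
  -- g is Lipschitz on Ici 0
  have hg_nonneg : ∀ u, 0 ≤ u → 0 ≤ g u := by
    intro u hu
    have := (hv u hu).1
    simp only [hg]; linarith
  have hg_lip : LipschitzOnWith ⟨γ⁻¹, by positivity⟩ g (Set.Ici 0) := by
    apply LipschitzOnWith.of_dist_le_mul
    intro x hx y hy
    simp only [Set.mem_Ici] at hx hy
    have key : ∀ a b : ℝ, 0 ≤ a → 0 ≤ b → g a ≤ g b →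
        dist (g a) (g b) ≤ γ⁻¹ * dist a b := by
      intro a b ha hb hab
      have h1 : γ * (g b - g a) ≤ f (g b) - f (g a) :=
        hf_mono (g a) (g b) (hg_nonneg a ha) hab
      rw [hfg a ha, hfg b hb] at h1
      rw [Real.dist_eq, Real.dist_eq, abs_of_nonpos (by linarith)]
      have hba : b - a ≤ |a - b| := by
        rw [abs_sub_comm]; exact le_abs_self _
      have hkey : g b - g a ≤ γ⁻¹ * |a - b| := by
        rw [inv_mul_eq_div, le_div_iff₀ hγ0]
        nlinarith
      linarith
    rcases le_total (g x) (g y) with h | h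
    · have := key x y hx hy h
      exact this
    · have := key y x hy hx h
      rw [dist_comm, dist_comm x y]
      exact this
  have hg_cont : ContinuousAt g t :=
    hg_lip.continuousOn.continuousAt (Ici_mem_nhds ht)
  have hf' : HasDerivAt f (1 - d) (g t) := by
    have : HasDerivAt f (1 - d) s₀ := (hasDerivAt_id s₀).sub hw'
    simpa [hg, hs₀] using this
  have hev : ∀ᶠ u in nhds t, f (g u) = u := by
    filter_upwards [eventually_gt_nhds ht] with u hu
    exact hfg u hu.le
  have hginv : HasDerivAt g (1 - d)⁻¹ t :=
    HasDerivAt.of_local_left_inverse hg_cont hf' (ne_of_gt h1d) hev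
  have hvderiv : HasDerivAt v ((1 - d)⁻¹ - 1) t := by
    have h := hginv.sub (hasDerivAt_id t)
    have hfun : (g - id) = v := by
      funext u; simp [hg]
    rwa [hfun] at h
  convert hvderiv using 1
  field_simp
  ring
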